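/- arXiv:0803.2796 — 2 statements merged into one kernel-verified Lean document; each statement's English description precedes it below -/
import Mathlib

section
/- (Andréief identity, discrete form.) Let φ_0, ..., φ_k : ℤ → ℝ and f : ℤ → ℝ be functions with suitable summability (e.g. finitely supported f). Then Σ_{y ∈ ℤ^{k+1}} det(φ_j(y_i))_{0≤i,j≤k} · det(φ_l(y_i))_{0≤i,l≤k} · Π_{i=0}^{k} f(y_i) = (k+1)! · det( Σ_{x ∈ ℤ} φ_j(x) φ_l(x) f(x) )_{0≤j,l≤k}. -/
/-- Andréief's identity in discrete form: for functions `φ_0, …, φ_k : ℤ → ℝ` and a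
finitely supported weight `f : ℤ → ℝ`,
`Σ_y det(φ_j(y_i)) · det(φ_l(y_i)) · Π_i f(y_i) = (k+1)! · det(Σ_x φ_j(x) φ_l(x) f(x))`. -/
theorem andreief_identity (k : ℕ) (φ : Fin (k + 1) → ℤ → ℝ) (f : ℤ → ℝ)
    (hf : (Function.support f).Finite) :
    ∑' y : Fin (k + 1) → ℤ,
      (Matrix.det (Matrix.of fun i j : Fin (k + 1) => φ j (y i)) *
        Matrix.det (Matrix.of fun i l : Fin (k + 1) => φ l (y i)) *
        ∏ i : Fin (k + 1), f (y i)) =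
    (Nat.factorial (k + 1) : ℝ) *
      Matrix.det (Matrix.of fun j l : Fin (k + 1) => ∑' x : ℤ, φ j x * φ l x * f x) := by
  classical
  set s : Finset ℤ := hf.toFinset with hs
  have hfx : ∀ x : ℤ, x ∉ s → f x = 0 := by
    intro x hx
    by_contra h
    exact hx (hf.mem_toFinset.mpr h)
  -- RHS inner tsums are finite sums
  have hM : ∀ j l : Fin (k + 1), (∑' x : ℤ, φ j x * φ l x * f x)
      = ∑ x ∈ s, φ j x * φ l x * f x := by
    intro j l
    refine tsum_eq_sum ?_
    intro x hx
    rw [hfx x hx, mul_zero]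
  -- LHS tsum is a finite sum over piFinset
  have hL : (∑' y : Fin (k + 1) → ℤ,
      (Matrix.det (Matrix.of fun i j : Fin (k + 1) => φ j (y i)) *
        Matrix.det (Matrix.of fun i l : Fin (k + 1) => φ l (y i)) *
        ∏ i : Fin (k + 1), f (y i)))
      = ∑ y ∈ Fintype.piFinset (fun _ : Fin (k + 1) => s),
      (Matrix.det (Matrix.of fun i j : Fin (k + 1) => φ j (y i)) *
        Matrix.det (Matrix.of fun i l : Fin (k + 1) => φ l (y i)) *
        ∏ i : Fin (k + 1), f (y i)) := by
    refine tsum_eq_sum ?_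
    intro y hy
    rw [Fintype.mem_piFinset] at hy
    push_neg at hy
    obtain ⟨i, hi⟩ := hy
    have : ∏ i : Fin (k + 1), f (y i) = 0 :=
      Finset.prod_eq_zero (Finset.mem_univ i) (hfx _ hi)
    rw [this, mul_zero]
  rw [hL]
  simp only [hM]
  -- expand the second determinant over permutations
  have expand2 : ∀ y : Fin (k + 1) → ℤ,
      Matrix.det (Matrix.of fun i l : Fin (k + 1) => φ l (y i))
        = ∑ σ : Equiv.Perm (Fin (k + 1)),
            (Equiv.Perm.sign σ : ℝ) * ∏ i, φ (σ i) (y i) := by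
    intro y
    rw [← Matrix.det_transpose, Matrix.det_apply']
    rfl
  calc
    ∑ y ∈ Fintype.piFinset (fun _ : Fin (k + 1) => s),
      (Matrix.det (Matrix.of fun i j : Fin (k + 1) => φ j (y i)) *
        Matrix.det (Matrix.of fun i l : Fin (k + 1) => φ l (y i)) *
        ∏ i : Fin (k + 1), f (y i))
      = ∑ σ : Equiv.Perm (Fin (k + 1)), (Equiv.Perm.sign σ : ℝ) *
          ∑ y ∈ Fintype.piFinset (fun _ : Fin (k + 1) => s),
            Matrix.det (Matrix.of fun i j : Fin (k + 1) => φ j (y i)) *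
              ∏ i, (φ (σ i) (y i) * f (y i)) := by
        have step : ∀ y : Fin (k + 1) → ℤ,
            Matrix.det (Matrix.of fun i j : Fin (k + 1) => φ j (y i)) *
              Matrix.det (Matrix.of fun i l : Fin (k + 1) => φ l (y i)) *
              ∏ i : Fin (k + 1), f (y i)
            = ∑ σ : Equiv.Perm (Fin (k + 1)), (Equiv.Perm.sign σ : ℝ) *
                (Matrix.det (Matrix.of fun i j : Fin (k + 1) => φ j (y i)) *
                  ∏ i, (φ (σ i) (y i) * f (y i))) := by
          intro y
          rw [expand2 y, Finset.mul_sum, Finset.sum_mul]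
          refine Finset.sum_congr rfl fun σ _ => ?_
          rw [Finset.prod_mul_distrib]
          ring
        simp only [step]
        rw [Finset.sum_comm]
        exact Finset.sum_congr rfl fun σ _ => (Finset.mul_sum _ _ _).symm
    _ = ∑ σ : Equiv.Perm (Fin (k + 1)), (Equiv.Perm.sign σ : ℝ) *
          ((Equiv.Perm.sign σ : ℝ) *
            Matrix.det (Matrix.of fun j l : Fin (k + 1) => ∑ x ∈ s, φ j x * φ l x * f x)) := by
        refine Finset.sum_congr rfl fun σ _ => ?_
        congr 1
        set D := (Matrix.detRowAlternating :
          (Fin (k + 1) → ℝ) [⋀^Fin (k + 1)]→ₗ[ℝ] ℝ).toMultilinearMap with hD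
        set g : Fin (k + 1) → ℤ → (Fin (k + 1) → ℝ) :=
          fun i x => (φ (σ i) x * f x) • (fun j => φ j x) with hg
        have hterm : ∀ y : Fin (k + 1) → ℤ,
            Matrix.det (Matrix.of fun i j : Fin (k + 1) => φ j (y i)) *
              ∏ i, (φ (σ i) (y i) * f (y i)) = D (fun i => g i (y i)) := by
          intro y
          rw [hg]
          simp only []
          rw [D.map_smul_univ (fun i => φ (σ i) (y i) * f (y i))
            (fun i => fun j => φ j (y i)), smul_eq_mul, mul_comm]
          rfl
        rw [Finset.sum_congr rfl fun y _ => hterm y,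
          ← D.map_sum_finset g (fun _ => s)]
        have h2 : (fun i => ∑ x ∈ s, g i x)
            = ((Matrix.of fun j l : Fin (k + 1) =>
                ∑ x ∈ s, φ j x * φ l x * f x).submatrix σ id) := by
          funext i j
          rw [Finset.sum_apply]
          simp only [Matrix.submatrix_apply, Matrix.of_apply, id, hg, Pi.smul_apply,
            smul_eq_mul]
          exact Finset.sum_congr rfl fun x _ => by ring
        rw [h2]
        have h3 : D ((Matrix.of fun j l : Fin (k + 1) =>
            ∑ x ∈ s, φ j x * φ l x * f x).submatrix σ id)
            = Matrix.det ((Matrix.of fun j l : Fin (k + 1) =>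
                ∑ x ∈ s, φ j x * φ l x * f x).submatrix σ id) := rfl
        rw [h3, Matrix.det_permute]

    _ = (Nat.factorial (k + 1) : ℝ) *
          Matrix.det (Matrix.of fun j l : Fin (k + 1) => ∑ x ∈ s, φ j x * φ l x * f x) := by
        have hsq : ∀ σ : Equiv.Perm (Fin (k + 1)),
            (Equiv.Perm.sign σ : ℝ) * (Equiv.Perm.sign σ : ℝ) = 1 := by
          intro σ
          rcases Int.units_eq_one_or (Equiv.Perm.sign σ) with h | h <;> simp [h]
        simp only [← mul_assoc, hsq, one_mul, Finset.sum_const, Finset.card_univ,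
          Fintype.card_perm, Fintype.card_fin, nsmul_eq_mul]
end

section
/- (Characteristics of a scalar conservation law are straight lines.) Let J : ℝ → ℝ be C², let c(ρ) = J'(ρ), and suppose ρ(x,t) is a C¹ solution of ∂ρ/∂t + c(ρ)·∂ρ/∂x = 0 on ℝ × [0,T). Then for any point x_0 and ρ_0 = ρ(x_0, 0), the function t ↦ ρ(x_0 + c(ρ_0)·t, t) is constant equal to ρ_0, as long as the straight line stays in the domain of the solution. -/
open Set

/-- Characteristics of a scalar conservation law are straight lines: a C¹ solution of
`∂ρ/∂t + c(ρ)·∂ρ/∂x = 0` on `ℝ × [0,T)` is constant along the straight line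
`x = x₀ + c(ρ(x₀,0))·t`. Here the first coordinate is `x`, the second is `t`. -/
theorem characteristics_constant (T : ℝ) (hT : 0 < T)
    (J : ℝ → ℝ) (hJ : ContDiff ℝ 2 J)
    (ρ : ℝ × ℝ → ℝ)
    (hρ : ContDiffOn ℝ 1 ρ (univ ×ˢ Ico 0 T))
    (hpde : ∀ p ∈ univ ×ˢ Ico (0 : ℝ) T,
      fderivWithin ℝ ρ (univ ×ˢ Ico 0 T) p ((0 : ℝ), (1 : ℝ)) +
        deriv J (ρ p) * fderivWithin ℝ ρ (univ ×ˢ Ico 0 T) p ((1 : ℝ), (0 : ℝ)) = 0)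
    (x₀ : ℝ) :
    ∀ t ∈ Ico (0 : ℝ) T, ρ (x₀ + deriv J (ρ (x₀, 0)) * t, t) = ρ (x₀, 0) := by
  set S : Set (ℝ × ℝ) := univ ×ˢ Ico 0 T with hS
  set c : ℝ → ℝ := deriv J with hc
  set c₀ : ℝ := c (ρ (x₀, 0)) with hc₀
  set γ : ℝ → ℝ × ℝ := fun τ => (x₀ + c₀ * τ, τ) with hγ
  set f : ℝ → ℝ := fun τ => ρ (γ τ) with hf
  have hUD : UniqueDiffOn ℝ S := uniqueDiffOn_univ.prod (uniqueDiffOn_Ico 0 T)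
  have hγmem : ∀ τ ∈ Ico (0:ℝ) T, γ τ ∈ S := fun τ hτ => ⟨trivial, hτ⟩
  have hγcont : Continuous γ := by fun_prop
  have hf0 : f 0 = ρ (x₀, 0) := by simp [hf, hγ]
  have hc1 : ContDiff ℝ 1 c := by
    have h2 : (2 : WithTop ℕ∞) = 1 + 1 := by norm_num
    rw [h2, contDiff_succ_iff_deriv] at hJ
    exact hJ.2.2
  set u : ℝ → ℝ := fun τ => fderivWithin ℝ ρ S (γ τ) ((1:ℝ), (0:ℝ)) with hu
  intro t ht
  rcases eq_or_lt_of_le ht.1 with h0t | h0t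
  · rw [← h0t]; simpa using hf0
  have hsub : Icc (0:ℝ) t ⊆ Ico 0 T := fun s hs => ⟨hs.1, lt_of_le_of_lt hs.2 ht.2⟩
  have hmaps : MapsTo γ (Icc (0:ℝ) t) S := fun s hs => hγmem s (hsub hs)
  have hfc : ContinuousOn f (Icc 0 t) :=
    hρ.continuousOn.comp hγcont.continuousOn hmaps
  have hucS : ContinuousOn (fderivWithin ℝ ρ S) S :=
    hρ.continuousOn_fderivWithin hUD le_rfl
  have huc : ContinuousOn u (Icc 0 t) := by
    have h1 : ContinuousOn (fun p => fderivWithin ℝ ρ S p ((1:ℝ),(0:ℝ))) S :=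
      (ContinuousLinearMap.apply ℝ ℝ ((1:ℝ),(0:ℝ))).continuous.comp_continuousOn hucS
    exact h1.comp hγcont.continuousOn hmaps
  -- bound on f
  obtain ⟨M₀, hM₀⟩ := (isCompact_Icc (a := (0:ℝ)) (b := t)).exists_bound_of_continuousOn hfc
  set M : ℝ := max M₀ |ρ (x₀, 0)| with hM
  have hfmem : ∀ s ∈ Icc (0:ℝ) t, f s ∈ Icc (-M) M := by
    intro s hs
    have h2 := hM₀ s hs
    rw [Real.norm_eq_abs, abs_le] at h2
    exact ⟨le_trans (neg_le_neg (le_max_left M₀ |ρ (x₀,0)|)) h2.1,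
      h2.2.trans (le_max_left _ _)⟩
  have hρ₀mem : ρ (x₀, 0) ∈ Icc (-M) M := by
    have h1 : |ρ (x₀,0)| ≤ M := le_max_right _ _
    rw [abs_le] at h1; exact h1
  -- bound on u via clamping
  obtain ⟨U₀, hU₀⟩ := (isCompact_Icc (a := (0:ℝ)) (b := t)).exists_bound_of_continuousOn huc
  set U : ℝ := max U₀ 0 with hUdef
  set π : ℝ → ℝ := fun τ => max 0 (min τ t) with hπ
  have hπmem : ∀ τ, π τ ∈ Icc (0:ℝ) t :=
    fun τ => ⟨le_max_left _ _, max_le ht.1 (min_le_right _ _)⟩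
  have hπeq : ∀ τ ∈ Icc (0:ℝ) t, π τ = τ := by
    intro τ hτ; simp [hπ, min_eq_left hτ.2, max_eq_right hτ.1]
  set w : ℝ → ℝ := fun τ => u (π τ) with hw
  have hwb : ∀ τ, |w τ| ≤ U := by
    intro τ
    have h2 := hU₀ (π τ) (hπmem τ)
    rw [Real.norm_eq_abs] at h2
    exact h2.trans (le_max_left _ _)
  have hUnn : (0:ℝ) ≤ U := le_max_right _ _
  -- Lipschitz bound for c on Icc (-M) M
  obtain ⟨L₀, hL₀⟩ := (isCompact_Icc (a := -M) (b := M)).exists_bound_of_continuousOn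
    ((hc1.continuous_deriv le_rfl).continuousOn (s := Icc (-M) M))
  set L : ℝ := max L₀ 0 with hLdef
  have hLnn : (0:ℝ) ≤ L := le_max_right _ _
  have hclip : ∀ y ∈ Icc (-M) M, ∀ z ∈ Icc (-M) M, |c z - c y| ≤ L * |z - y| := by
    intro y hy z hz
    have h6 := (convex_Icc (-M) M).norm_image_sub_le_of_norm_deriv_le
      (f := c) (C := L) (fun a _ => (hc1.differentiable one_ne_zero).differentiableAt)
      (fun a ha => (hL₀ a ha).trans (le_max_left _ _)) hy hz
    simpa [Real.norm_eq_abs] using h6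
  -- the ODE
  set v : ℝ → ℝ → ℝ := fun τ y => (c₀ - c y) * w τ with hv
  set K : NNReal := (L * U).toNNReal with hK
  have hvlip : ∀ τ, LipschitzOnWith K (v τ) (Icc (-M) M) := by
    intro τ
    apply LipschitzOnWith.of_dist_le_mul
    intro y hy z hz
    have h1 : v τ y - v τ z = (c z - c y) * w τ := by ring
    rw [Real.dist_eq, Real.dist_eq, h1, abs_mul]
    have h2 : |c z - c y| ≤ L * |z - y| := hclip y hy z hz
    have h3 : |c z - c y| * |w τ| ≤ (L * |z - y|) * U :=
      mul_le_mul h2 (hwb τ) (abs_nonneg _) (by positivity)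
    have h4 : (K : ℝ) = L * U := Real.coe_toNNReal _ (by positivity)
    have h5 : |z - y| = |y - z| := abs_sub_comm _ _
    calc |c z - c y| * |w τ| ≤ L * |z - y| * U := h3
      _ = (L * U) * |y - z| := by rw [h5]; ring
      _ = (K : ℝ) * |y - z| := by rw [h4]
  -- f solves the ODE
  have hf' : ∀ τ ∈ Ico (0:ℝ) t, HasDerivWithinAt f (v τ (f τ)) (Ici τ) τ := by
    intro τ hτ
    have hτT : τ ∈ Ico (0:ℝ) T := ⟨hτ.1, hτ.2.trans ht.2⟩
    have hγτ : γ τ ∈ S := hγmem τ hτT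
    have hρd : HasFDerivWithinAt ρ (fderivWithin ℝ ρ S (γ τ)) S (γ τ) :=
      ((hρ.differentiableOn one_ne_zero) _ hγτ).hasFDerivWithinAt
    have hγd : HasDerivWithinAt γ ((c₀ : ℝ), (1:ℝ)) (Icc τ t) τ := by
      have h1 : HasDerivAt (fun s : ℝ => x₀ + c₀ * s) c₀ τ := by
        simpa using ((hasDerivAt_id τ).const_mul c₀).const_add x₀
      exact (h1.prodMk (hasDerivAt_id τ)).hasDerivWithinAt
    have hmaps' : MapsTo γ (Icc τ t) S :=
      fun s hs => hmaps ⟨hτ.1.trans hs.1, hs.2⟩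
    have hcomp : HasDerivWithinAt f (fderivWithin ℝ ρ S (γ τ) ((c₀:ℝ),(1:ℝ))) (Icc τ t) τ :=
      hρd.comp_hasDerivWithinAt τ hγd hmaps'
    have hIci : Icc τ t ∈ nhdsWithin τ (Ici τ) :=
      Icc_mem_nhdsGE_of_mem ⟨le_refl τ, hτ.2⟩
    have hfinal : HasDerivWithinAt f (fderivWithin ℝ ρ S (γ τ) ((c₀:ℝ),(1:ℝ))) (Ici τ) τ :=
      hcomp.mono_of_mem_nhdsWithin hIci
    have hval : fderivWithin ℝ ρ S (γ τ) ((c₀:ℝ),(1:ℝ)) = v τ (f τ) := by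
      have hsplit : ((c₀:ℝ),(1:ℝ)) = c₀ • ((1:ℝ),(0:ℝ)) + ((0:ℝ),(1:ℝ)) := by
        simp [Prod.ext_iff]
      have hp := hpde (γ τ) hγτ
      rw [hsplit, map_add, map_smul]
      have hwτ : w τ = u τ := congrArg u (hπeq τ ⟨hτ.1, hτ.2.le⟩)
      simp only [smul_eq_mul, hv, hwτ, hu]
      have : ρ (γ τ) = f τ := rfl
      rw [hS] at *
      linarith [hp]
    rwa [hval] at hfinal
  -- the constant solves the ODE
  have hg' : ∀ τ ∈ Ico (0:ℝ) t,
      HasDerivWithinAt (fun _ : ℝ => ρ (x₀, 0)) (v τ (ρ (x₀, 0))) (Ici τ) τ := by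
    intro τ hτ
    have h0 : v τ (ρ (x₀, 0)) = 0 := by simp [hv, hc₀]
    rw [h0]
    exact hasDerivWithinAt_const τ _ _
  have key := ODE_solution_unique_of_mem_Icc_right (v := v) (s := fun _ => Icc (-M) M)
    (K := K) (fun τ _ => hvlip τ) hfc hf' (fun τ hτ => hfmem τ ⟨hτ.1, hτ.2.le⟩)
    (continuousOn_const) hg' (fun τ hτ => hρ₀mem) hf0
  exact key ⟨ht.1, le_refl t⟩
end
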